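/- Every polynomial U_{k+1} in the sequence has k+1 real and distinct (simple) roots. -/

import Mathlib

open Polynomial

noncomputable def U (c r : ℕ → ℝ) : ℕ → Polynomial ℝ
  | 0 => 1
  | 1 => X - C (c 0)
  | (k+2) => (X + C ((-1)^(k+2) * c (k+1))) * U c r (k+1) - C (r (k+1)) * U c r k


section Aux
open Filter

/-- Sign of a product of nonzero reals. -/
lemma prod_sign_aux {ι : Type*} [DecidableEq ι] (s : Finset ι) (f : ι → ℝ)
    (h : ∀ j ∈ s, f j ≠ 0) :
    0 < (-1:ℝ)^((s.filter fun j => f j < 0).card) * ∏ j ∈ s, f j := by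
  induction s using Finset.induction_on with
  | empty => simp
  | @insert a s ha ih =>
    have hne : f a ≠ 0 := h a (Finset.mem_insert_self a s)
    have ih' := ih (fun j hj => h j (Finset.mem_insert_of_mem hj))
    rw [Finset.filter_insert, Finset.prod_insert ha]
    by_cases hfa : f a < 0
    · rw [if_pos hfa, Finset.card_insert_of_notMem
        (fun hmem => ha (Finset.mem_of_mem_filter _ hmem)), pow_succ]
      nlinarith
    · have hpos : 0 < f a := lt_of_le_of_ne (not_lt.mp hfa) (Ne.symm hne)
      rw [if_neg hfa]
      nlinarith

lemma ivt_root (p : Polynomial ℝ) {a b : ℝ} (hab : a < b)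
    (h : eval a p * eval b p < 0) : ∃ y, a < y ∧ y < b ∧ eval y p = 0 := by
  have hc : ContinuousOn (fun x => eval x p) (Set.Icc a b) :=
    (Polynomial.continuous p).continuousOn
  rcases mul_neg_iff.mp h with ⟨hpa, hpb⟩ | ⟨hpa, hpb⟩
  · obtain ⟨y, hy, hy0⟩ := intermediate_value_Ioo' hab.le hc ⟨hpb, hpa⟩
    exact ⟨y, hy.1, hy.2, hy0⟩
  · obtain ⟨y, hy, hy0⟩ := intermediate_value_Ioo hab.le hc ⟨hpa, hpb⟩
    exact ⟨y, hy.1, hy.2, hy0⟩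

lemma sign_mul_neg {x y : ℝ} (m : ℕ) (hx : 0 < (-1:ℝ)^(m+1) * x)
    (hy : 0 < (-1:ℝ)^m * y) : x * y < 0 := by
  have hs : (-1:ℝ)^m * (-1:ℝ)^m = 1 := by
    rw [← pow_add]; exact Even.neg_one_pow ⟨m, rfl⟩
  rw [pow_succ] at hx
  nlinarith

lemma exists_eval_pos (p : Polynomial ℝ) (hm : p.Monic) (hd : 0 < p.natDegree) (z : ℝ) :
    ∃ b, z < b ∧ 0 < eval b p := by
  have ht := tendsto_atTop_of_leadingCoeff_nonneg p (natDegree_pos_iff_degree_pos.mp hd)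
    (by rw [hm.leadingCoeff]; norm_num)
  obtain ⟨b, hb1, hb2⟩ := ((ht.eventually_gt_atTop 0).and (eventually_gt_atTop z)).exists
  exact ⟨b, hb2, hb1⟩

lemma exists_eval_neg_side (p : Polynomial ℝ) (hm : p.Monic) (hd : 0 < p.natDegree) (z : ℝ) :
    ∃ a, a < z ∧ 0 < (-1:ℝ)^p.natDegree * eval a p := by
  set n := p.natDegree with hn
  set q : Polynomial ℝ := C ((-1:ℝ)^n) * p.comp (-X) with hq
  have hqeval : ∀ x, eval x q = (-1:ℝ)^n * eval (-x) p := by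
    intro x; simp [hq, eval_comp]
  have hdc : (p.comp (-X)).natDegree = n := by
    rw [natDegree_comp]; simp [hn]
  have hlcc : (p.comp (-X)).leadingCoeff = (-1:ℝ)^n := by
    rw [leadingCoeff_comp (by simp), hm.leadingCoeff]
    simp [hn]
  have hqm : q.Monic := by
    unfold Polynomial.Monic
    rw [hq, leadingCoeff_mul, leadingCoeff_C, hlcc, ← pow_add]
    exact Even.neg_one_pow ⟨n, rfl⟩
  have hqd : q.natDegree = n := by
    rw [hq, natDegree_C_mul (pow_ne_zero n (by norm_num) : ((-1:ℝ)^n) ≠ 0), hdc]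
  obtain ⟨b, hb1, hb2⟩ := exists_eval_pos q hqm (hqd ▸ hd) (-z)
  refine ⟨-b, by linarith, ?_⟩
  rw [hqeval b] at hb2
  simpa using hb2


lemma U_monic (c r : ℕ → ℝ) : ∀ k, (U c r k).Monic ∧ (U c r k).natDegree = k
  | 0 => ⟨monic_one, by simp [U]⟩
  | 1 => ⟨monic_X_sub_C _, natDegree_X_sub_C _⟩
  | (k+2) => by
    obtain ⟨hm1, hd1⟩ := U_monic c r (k+1)
    obtain ⟨_, hd0⟩ := U_monic c r k
    have hmul : ((X + C ((-1:ℝ)^(k+2) * c (k+1))) * U c r (k+1)).Monic :=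
      (monic_X_add_C _).mul hm1
    have hdmul : ((X + C ((-1:ℝ)^(k+2) * c (k+1))) * U c r (k+1)).natDegree = k+2 := by
      rw [(monic_X_add_C _).natDegree_mul hm1, natDegree_X_add_C, hd1]; omega
    have hndlt : (C (r (k+1)) * U c r k).natDegree <
        ((X + C ((-1:ℝ)^(k+2) * c (k+1))) * U c r (k+1)).natDegree := by
      rw [hdmul]
      exact lt_of_le_of_lt (natDegree_C_mul_le _ _) (by omega)
    have hdlt : (C (r (k+1)) * U c r k).degree <
        ((X + C ((-1:ℝ)^(k+2) * c (k+1))) * U c r (k+1)).degree :=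
      degree_lt_degree (by rw [hdmul]; exact lt_of_le_of_lt (natDegree_C_mul_le _ _) (by omega))
    refine ⟨?_, ?_⟩
    · show ((X + C ((-1:ℝ)^(k+2) * c (k+1))) * U c r (k+1) - C (r (k+1)) * U c r k).Monic
      exact hmul.sub_of_left hdlt
    · show ((X + C ((-1:ℝ)^(k+2) * c (k+1))) * U c r (k+1) - C (r (k+1)) * U c r k).natDegree = k+2
      rw [natDegree_sub_eq_left_of_natDegree_lt hndlt, hdmul]

lemma monic_eq_prod_of_roots (p : Polynomial ℝ) (hm : p.Monic) (n : ℕ) (hd : p.natDegree = n)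
    (η : ℕ → ℝ) (hinj : ∀ i j, i < n → j < n → η i = η j → i = j)
    (hroot : ∀ i < n, eval (η i) p = 0) :
    p = ∏ i ∈ Finset.range n, (X - C (η i)) := by
  classical
  have hp0 : p ≠ 0 := hm.ne_zero
  set s : Multiset ℝ := (Finset.range n).val.map η with hs
  have hnodup : s.Nodup := Multiset.Nodup.map_on
    (fun i hi j hj hij => hinj i j (by simpa using hi) (by simpa using hj) hij)
    (Finset.range n).nodup
  have hsub : s ⊆ p.roots := by
    intro x hx
    obtain ⟨i, hi, rfl⟩ := Multiset.mem_map.mp hx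
    rw [mem_roots hp0]
    exact hroot i (by simpa using hi)
  have hle : s ≤ p.roots := (Multiset.le_iff_subset hnodup).mpr hsub
  have hscard : Multiset.card s = n := by simp [hs]
  have hcard : Multiset.card p.roots ≤ Multiset.card s := by
    rw [hscard, ← hd]; exact p.card_roots'
  have hroots : s = p.roots := Multiset.eq_of_le_of_card_le hle hcard
  have hsplit : Splits p :=
    splits_iff_card_roots.mpr (by rw [← hroots, hscard, hd])
  have hps := hsplit.eq_prod_roots_of_monic hm
  rw [hps, ← hroots, hs, Multiset.map_map]
  rfl

lemma U_key (c r : ℕ → ℝ) (hr : ∀ k, 1 ≤ k → 0 < r k) (k : ℕ) :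
    ∃ ξ : ℕ → ℝ,
      (∀ i j, i < j → j ≤ k → ξ i < ξ j) ∧
      U c r (k+1) = ∏ i ∈ Finset.range (k+1), (X - C (ξ i)) ∧
      (∀ i ≤ k, 0 < (-1:ℝ)^(k-i) * (U c r k).eval (ξ i)) := by
  induction k with
  | zero =>
    refine ⟨fun _ => c 0, fun i j hij hj => by omega, ?_, ?_⟩
    · rw [Finset.prod_range_one]
      show U c r 1 = _
      simp [U]
    · intro i hi
      interval_cases i
      show 0 < (-1:ℝ)^0 * (U c r 0).eval (c 0)
      simp [U]
  | succ k ih =>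
    obtain ⟨ξ, hmono, hprod, hsign⟩ := ih
    have hrpos : 0 < r (k+1) := hr (k+1) (by omega)
    obtain ⟨hm2, hd2⟩ := U_monic c r (k+2)
    have hrec : U c r (k+2) =
        (X + C ((-1)^(k+2) * c (k+1))) * U c r (k+1) - C (r (k+1)) * U c r k := by
      simp [U]
    have hsignp : ∀ i ≤ k, 0 < (-1:ℝ)^(k+1-i) * (U c r (k+2)).eval (ξ i) := by
      intro i hi
      have hz : (U c r (k+1)).eval (ξ i) = 0 := by
        rw [hprod, eval_prod]
        exact Finset.prod_eq_zero (i := i) (Finset.mem_range.mpr (by omega)) (by simp)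
      have he : (U c r (k+2)).eval (ξ i) = -(r (k+1) * (U c r k).eval (ξ i)) := by
        rw [hrec]; simp [hz]
      rw [he, show k+1-i = (k-i)+1 by omega, pow_succ]
      have h1 := hsign i hi
      nlinarith
    obtain ⟨b, hbgt, hbpos⟩ := exists_eval_pos (U c r (k+2)) hm2 (by omega) (ξ k)
    obtain ⟨a, halt, hapos⟩ := exists_eval_neg_side (U c r (k+2)) hm2 (by omega) (ξ 0)
    rw [hd2] at hapos
    set lo : ℕ → ℝ := fun i => if i = 0 then a else ξ (i-1) with hlo
    set hig : ℕ → ℝ := fun i => if i = k+1 then b else ξ i with hhig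
    have lo0 : lo 0 = a := by rw [hlo]; simp
    have loeq : ∀ i, 1 ≤ i → lo i = ξ (i-1) := by
      intro i h1; rw [hlo]; exact if_neg (by omega)
    have higeq : ∀ i, i ≤ k → hig i = ξ i := by
      intro i h1; rw [hhig]; exact if_neg (by omega)
    have higtop : hig (k+1) = b := by rw [hhig]; simp
    have hlolt : ∀ i ≤ k+1, lo i < hig i := by
      intro i hik
      by_cases hi0 : i = 0
      · subst hi0; rw [lo0, higeq 0 (by omega)]; exact halt
      · by_cases hitop : i = k+1
        · subst hitop; rw [loeq (k+1) (by omega), higtop]; simpa using hbgt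
        · rw [loeq i (by omega), higeq i (by omega)]
          exact hmono (i-1) i (by omega) (by omega)
    have hsiglo : ∀ i ≤ k+1, 0 < (-1:ℝ)^(k+2-i) * (U c r (k+2)).eval (lo i) := by
      intro i hik
      by_cases hi0 : i = 0
      · subst hi0; rw [lo0]; simpa using hapos
      · rw [loeq i (by omega), show k+2-i = k+1-(i-1) by omega]
        exact hsignp (i-1) (by omega)
    have hsighi : ∀ i ≤ k+1, 0 < (-1:ℝ)^(k+1-i) * (U c r (k+2)).eval (hig i) := by
      intro i hik
      by_cases hitop : i = k+1
      · subst hitop; rw [higtop, Nat.sub_self, pow_zero, one_mul]; exact hbpos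
      · rw [higeq i (by omega)]; exact hsignp i (by omega)
    have hmulneg : ∀ i ≤ k+1, (U c r (k+2)).eval (lo i) * (U c r (k+2)).eval (hig i) < 0 := by
      intro i hik
      refine sign_mul_neg (k+1-i) ?_ (hsighi i hik)
      rw [show k+1-i+1 = k+2-i by omega]
      exact hsiglo i hik
    have hex : ∀ i, ∃ y, i ≤ k+1 → (lo i < y ∧ y < hig i ∧ (U c r (k+2)).eval y = 0) := by
      intro i
      by_cases hik : i ≤ k+1
      · obtain ⟨y, h1, h2, h3⟩ := ivt_root _ (hlolt i hik) (hmulneg i hik)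
        exact ⟨y, fun _ => ⟨h1, h2, h3⟩⟩
      · exact ⟨0, fun h => absurd h hik⟩
    choose η hη using hex
    have hmono' : ∀ i j, i < j → j ≤ k+1 → η i < η j := by
      intro i j hij hjk
      have h1 : η i < hig i := (hη i (by omega)).2.1
      have h2 : lo j < η j := (hη j hjk).1
      have h3 : hig i ≤ lo j := by
        rw [higeq i (by omega), loeq j (by omega)]
        rcases eq_or_lt_of_le (show i ≤ j-1 by omega) with he | hl
        · rw [he]
        · exact (hmono i (j-1) hl (by omega)).le
      linarith
    refine ⟨η, hmono', ?_, ?_⟩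
    · refine monic_eq_prod_of_roots _ hm2 (k+2) hd2 η ?_ (fun i hi => (hη i (by omega)).2.2)
      intro i j hi hj hije
      by_contra hne
      rcases Nat.lt_or_ge i j with h | h
      · exact absurd hije (ne_of_lt (hmono' i j h (by omega)))
      · exact absurd hije.symm (ne_of_lt (hmono' j i (by omega) (by omega)))
    · intro i hik
      rw [hprod, eval_prod]
      simp only [eval_sub, eval_X, eval_C]
      have hgt : ∀ j, j ≤ k → i ≤ j → η i < ξ j := by
        intro j hj hij
        have h1 : η i < ξ i := by
          have h := (hη i hik).2.1
          rwa [higeq i (by omega)] at h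
        rcases eq_or_lt_of_le hij with he | hl
        · rwa [← he]
        · exact h1.trans (hmono i j hl hj)
      have hlt2 : ∀ j, j ≤ k → j < i → ξ j < η i := by
        intro j hj hji
        have h1 : ξ (i-1) < η i := by
          have h := (hη i hik).1
          rwa [loeq i (by omega)] at h
        rcases eq_or_lt_of_le (show j ≤ i-1 by omega) with he | hl
        · rwa [he]
        · exact (hmono j (i-1) hl (by omega)).trans h1
      have hfilter : (Finset.range (k+1)).filter (fun j => η i - ξ j < 0)
          = Finset.Ico i (k+1) := by
        ext j
        simp only [Finset.mem_filter, Finset.mem_range, Finset.mem_Ico, sub_neg]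
        constructor
        · rintro ⟨hj, hlt'⟩
          refine ⟨?_, hj⟩
          by_contra h
          exact absurd hlt' (not_lt.mpr (hlt2 j (by omega) (by omega)).le)
        · rintro ⟨h1, h2⟩
          exact ⟨h2, hgt j (by omega) h1⟩
      have hne : ∀ j ∈ Finset.range (k+1), η i - ξ j ≠ 0 := by
        intro j hj
        have hj' : j ≤ k := by
          have := Finset.mem_range.mp hj; omega
        rcases Nat.lt_or_ge j i with h | h
        · exact sub_ne_zero.mpr (ne_of_gt (hlt2 j hj' h))
        · exact sub_ne_zero.mpr (ne_of_lt (hgt j hj' h))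
      have hps := prod_sign_aux (Finset.range (k+1)) (fun j => η i - ξ j) hne
      rwa [hfilter, Nat.card_Ico] at hps

end Aux

/-- Every `U_{k+1}` has `k+1` real, distinct (hence simple) roots. -/
theorem stmt3 (c r : ℕ → ℝ) (hr : ∀ k, 1 ≤ k → 0 < r k) (k : ℕ) :
    ∃ ξ : Fin (k+1) → ℝ, StrictMono ξ ∧
      (∀ i, (U c r (k+1)).eval (ξ i) = 0) ∧
      (∀ x : ℝ, (U c r (k+1)).eval x = 0 → ∃ i, x = ξ i) := by
  obtain ⟨ξ, hmono, hprod, _⟩ := U_key c r hr k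
  refine ⟨fun i => ξ i, ?_, ?_, ?_⟩
  · intro i j hij
    exact hmono i j hij (Nat.lt_succ_iff.mp j.isLt)
  · intro i
    rw [hprod, eval_prod]
    exact Finset.prod_eq_zero (i := (i:ℕ)) (Finset.mem_range.mpr i.isLt) (by simp)
  · intro x hx
    rw [hprod, eval_prod] at hx
    obtain ⟨j, hj, hj0⟩ := Finset.prod_eq_zero_iff.mp hx
    refine ⟨⟨j, Finset.mem_range.mp hj⟩, ?_⟩
    simpa [sub_eq_zero] using hj0
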